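/- Let σ ≥ 2 and k ≥ 2, and suppose that every string in [1..σ]^k occurs in circular T (e.g., T contains a de Bruijn sequence of order k). Then the number of runs of the Burrows–Wheeler transform of T satisfies r_T ≥ σ^{k−1}(σ−1). -/

import Mathlib

/-! Basic definitions: strings are lists of naturals; the separator `#` is `0`;
the alphabet is `Σ = [1..σ]`. Occurrences are taken in the circular version of `T`. -/

noncomputable section
open Classical

/-- `T` is a string over the alphabet `[1..σ]` followed by the separator `# = 0`
(so `#` occurs in `T` exactly once, at the last position). -/
def Wellformed (σ : ℕ) (T : List ℕ) : Prop :=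
  ∃ S : List ℕ, T = S ++ [0] ∧ ∀ c ∈ S, 1 ≤ c ∧ c ≤ σ

/-- The rotation of `T` starting at position `i`. -/
def rot (T : List ℕ) (i : ℕ) : List ℕ := T.drop i ++ T.take i

/-- `W` occurs at position `i` of the circular version of `T`. -/
def CircOccAt (T W : List ℕ) (i : ℕ) : Prop :=
  ∀ j < W.length, W.getD j 0 = T.getD ((i + j) % T.length) 0

/-- `𝒫_T(W)`: the set of starting positions of occurrences of `W` in the circular
version of `T`. -/
def Pset (T W : List ℕ) : Finset ℕ :=
  (Finset.range T.length).filter (fun i => CircOccAt T W i)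

/-- `W` occurs in the circular version of `T`. -/
def OccursCirc (T W : List ℕ) : Prop := (Pset T W).Nonempty

/-- `Σ^ℓ_T(W)`: the set of characters `a` such that `aW` occurs in circular `T`. -/
def SigmaL (T W : List ℕ) : Finset ℕ :=
  T.toFinset.filter (fun a => OccursCirc T (a :: W))

/-- `Σ^r_T(W)`: the set of characters `b` such that `Wb` occurs in circular `T`. -/
def SigmaR (T W : List ℕ) : Finset ℕ :=
  T.toFinset.filter (fun b => OccursCirc T (W ++ [b]))

/-- `W` is left-maximal in `T`. -/
def LeftMaximal (T W : List ℕ) : Prop := 1 < (SigmaL T W).card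

/-- `W` is right-maximal in `T`. -/
def RightMaximal (T W : List ℕ) : Prop := 1 < (SigmaR T W).card

/-- The (finite) collection of substrings of the circular version of `T`. -/
def circSubstrings (T : List ℕ) : Finset (List ℕ) :=
  ((Finset.range T.length) ×ˢ (Finset.range (T.length + 1))).image
    (fun p => (rot T p.1).take p.2)

/-- `ℳ_T`: the set of nonempty maximal repeats of `T`, i.e. repeats that are both
left-maximal and right-maximal.  (Every maximal repeat occurs in circular `T` and has
length at most `|T|`, so it belongs to `circSubstrings T`.) -/
def MaxRepeats (T : List ℕ) : Finset (List ℕ) :=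
  (circSubstrings T).filter
    (fun W => W ≠ [] ∧ 1 < (Pset T W).card ∧ LeftMaximal T W ∧ RightMaximal T W)

/-- Strict lexicographic comparison of strings (a proper prefix is smaller). -/
def lexLt : List ℕ → List ℕ → Bool
  | [], [] => false
  | [], _ :: _ => true
  | _ :: _, [] => false
  | a :: A, b :: B => decide (a < b) || (a == b && lexLt A B)

/-- Non-strict lexicographic comparison. -/
def lexLe (A B : List ℕ) : Bool := !(lexLt B A)

/-- The Burrows–Wheeler transform of `T`: the `i`-th character of `BWT T` is the last
character of the lexicographically `i`-th rotation of `T`. -/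
def BWT (T : List ℕ) : List ℕ :=
  (((List.range T.length).map (rot T)).mergeSort lexLe).map (fun R => R.getLast!)

/-- The number of runs of a string, i.e. the number of maximal intervals on which all
characters are equal. -/
def numRuns : List ℕ → ℕ
  | [] => 0
  | [_] => 1
  | a :: b :: l => (if a = b then 0 else 1) + numRuns (b :: l)


noncomputable section
open Classical

/-- `ℳ^r_T`: the set of rightmost maximal repeats of `T`: maximal repeats `W` such that
no string `WV` with `V` nonempty is left-maximal in `T`. -/
def RightmostMaxRepeats (T : List ℕ) : Finset (List ℕ) :=
  (MaxRepeats T).filter (fun W => ∀ V : List ℕ, V ≠ [] → ¬ LeftMaximal T (W ++ V))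

/-- `Y` is the shortest right-maximal extension of `X` in `T`: the shortest
right-maximal string of `T` having `X` as a prefix. -/
def ShortestRightMaxExt (T X Y : List ℕ) : Prop :=
  X <+: Y ∧ RightMaximal T Y ∧
    ∀ Z : List ℕ, X <+: Z → RightMaximal T Z → Y.length ≤ Z.length

/-- `ℱ^r_T`: pairs `(V, b)` with `V ∈ ℳ_T ∪ {ε}` and `b ∈ Σ^r_T(V)` such that either
`Vb` occurs exactly once in circular `T`, or the shortest right-maximal extension of
`Vb` is not a maximal repeat of `T`.  These pairs correspond to the suffix-tree edges
of `T` from maximal-repeat nodes to non-maximal-repeat nodes. -/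
def Fr (T : List ℕ) : Finset (List ℕ × ℕ) :=
  ((insert ([] : List ℕ) (MaxRepeats T)) ×ˢ T.toFinset).filter
    (fun p => p.2 ∈ SigmaR T p.1 ∧
      ((Pset T (p.1 ++ [p.2])).card = 1 ∨
        ∀ Y : List ℕ, ShortestRightMaxExt T (p.1 ++ [p.2]) Y → Y ∉ MaxRepeats T))

/-- `e_T`: the number of right extensions of maximal repeats of `T`, i.e. the number of
pairs `(V, b)` with `V ∈ ℳ_T ∪ {ε}` and `b ∈ Σ^r_T(V)`.  This equals the number of
arcs of the CDAWG of `T`. -/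
def eCount (T : List ℕ) : ℕ :=
  ∑ V ∈ insert ([] : List ℕ) (MaxRepeats T), (SigmaR T V).card

/-- The next LZ77 factor, to be placed at position `k` of `T`, may be `F` if `F` is a
single character (every single character of `T` has a source among the `σ+1` distinct
characters virtually preceding `T`), or if `F` has an occurrence in `T` starting at a
position `j` strictly before `k`. -/
def LZsource (T : List ℕ) (k : ℕ) (F : List ℕ) : Prop :=
  F.length = 1 ∨ ∃ j, j < k ∧ F <+: T.drop j

/-- `fs` is the LZ77 factorization of `T` (greedy: each factor is the longest prefix of
the remaining suffix admitting a source). -/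
def IsLZ77 (T : List ℕ) (fs : List (List ℕ)) : Prop :=
  fs.flatten = T ∧ (∀ F ∈ fs, F ≠ []) ∧
    ∀ i, (h : i < fs.length) →
      LZsource T ((fs.take i).flatten).length (fs.get ⟨i, h⟩) ∧
      ∀ F' : List ℕ, F' <+: T.drop ((fs.take i).flatten).length →
        (fs.get ⟨i, h⟩).length < F'.length →
          ¬ LZsource T ((fs.take i).flatten).length F'

/-- `N_T(X)`: the number of rotations of `T` lexicographically smaller than `X`. -/
def Nrank (T X : List ℕ) : ℕ :=
  ((List.range T.length).filter (fun i => lexLt (rot T i) X)).length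

/-- The string `a b a² b a³ b ⋯ aˣ b #`. -/
def Tx (a b x : ℕ) : List ℕ :=
  (((List.range x).map (fun i => List.replicate (i + 1) a ++ [b])).flatten) ++ [0]

end


noncomputable section AuxProof
open Classical

theorem lexLt_iff_lex : ∀ A B : List ℕ, lexLt A B = true ↔ List.Lex (· < ·) A B := by
  intro A
  induction A with
  | nil => intro B; cases B with
    | nil => simp [lexLt]
    | cons b B => simp [lexLt]
  | cons a A ih =>
    intro B; cases B with
    | nil => simp [lexLt]
    | cons b B =>
      simp only [lexLt, Bool.or_eq_true, decide_eq_true_eq, Bool.and_eq_true, beq_iff_eq]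
      constructor
      · rintro (h | ⟨rfl, h⟩)
        · exact List.Lex.rel h
        · exact List.Lex.cons ((ih B).mp h)
      · intro h
        cases h with
        | rel h => exact Or.inl h
        | cons h => exact Or.inr ⟨rfl, (ih B).mpr h⟩

theorem lexLe_iff (A B : List ℕ) : lexLe A B = true ↔ ¬ List.Lex (· < ·) B A := by
  rw [lexLe, Bool.not_eq_true', Bool.eq_false_iff, Ne, lexLt_iff_lex]

theorem lex_sandwich : ∀ (W A B C : List ℕ), W <+: A → W <+: C →
    (A = B ∨ List.Lex (· < ·) A B) → (B = C ∨ List.Lex (· < ·) B C) →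
    W.length ≤ B.length → W <+: B := by
  intro W
  induction W with
  | nil => intro _ B _ _ _ _ _ _; exact B.nil_prefix
  | cons w W ih =>
    intro A B C hWA hWC hAB hBC hlen
    obtain ⟨A', rfl⟩ := hWA
    obtain ⟨C', rfl⟩ := hWC
    rcases hAB with rfl | hAB
    · exact ⟨A', rfl⟩
    rcases hBC with rfl | hBC
    · exact ⟨C', rfl⟩
    cases B with
    | nil => simp at hlen
    | cons b B' =>
      simp only [List.cons_append] at hAB hBC
      cases hAB with
      | rel h1 =>
        cases hBC with
        | rel h2 => omega
        | cons h2 => omega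
      | cons h1 =>
        cases hBC with
        | rel h2 => omega
        | cons h2 =>
          have : W <+: B' := ih _ _ _ ⟨A', rfl⟩ ⟨C', rfl⟩ (Or.inr h1) (Or.inr h2)
            (by simpa using hlen)
          obtain ⟨t, rfl⟩ := this
          exact ⟨t, rfl⟩

theorem lex_trans : ∀ A B C : List ℕ, List.Lex (· < ·) A B → List.Lex (· < ·) B C →
    List.Lex (· < ·) A C := by
  intro A
  induction A with
  | nil =>
    intro B C hab hbc
    cases B with
    | nil => cases hab
    | cons b B' => cases C with
      | nil => cases hbc
      | cons c C' => exact List.Lex.nil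
  | cons a A ih =>
    intro B C hab hbc
    cases hab with
    | rel h1 =>
      cases hbc with
      | rel h2 => exact List.Lex.rel (lt_trans h1 h2)
      | cons h2 => exact List.Lex.rel h1
    | cons h1 =>
      cases hbc with
      | rel h2 => exact List.Lex.rel h2
      | cons h2 => exact List.Lex.cons (ih _ _ h1 h2)

theorem lex_irrefl : ∀ A : List ℕ, ¬ List.Lex (· < ·) A A := by
  intro A
  induction A with
  | nil => intro h; cases h
  | cons a A ih =>
    intro h
    cases h with
    | rel h1 => exact lt_irrefl _ h1
    | cons h1 => exact ih h1

theorem lex_asymm : ∀ A B : List ℕ, List.Lex (· < ·) A B → ¬ List.Lex (· < ·) B A := by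
  intro A B h1 h2
  exact lex_irrefl A (lex_trans A B A h1 h2)

theorem lex_tricho : ∀ A B : List ℕ,
    List.Lex (· < ·) A B ∨ A = B ∨ List.Lex (· < ·) B A := by
  intro A
  induction A with
  | nil =>
    intro B
    cases B with
    | nil => exact Or.inr (Or.inl rfl)
    | cons b B' => exact Or.inl List.Lex.nil
  | cons a A ih =>
    intro B
    cases B with
    | nil => exact Or.inr (Or.inr List.Lex.nil)
    | cons b B' =>
      rcases lt_trichotomy a b with h | rfl | h
      · exact Or.inl (List.Lex.rel h)
      · rcases ih B' with h | rfl | h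
        · exact Or.inl (List.Lex.cons h)
        · exact Or.inr (Or.inl rfl)
        · exact Or.inr (Or.inr (List.Lex.cons h))
      · exact Or.inr (Or.inr (List.Lex.rel h))

theorem lexLe_trans : ∀ a b c : List ℕ, lexLe a b = true → lexLe b c = true →
    lexLe a c = true := by
  intro a b c hab hbc
  rw [lexLe_iff] at *
  intro hca
  rcases lex_tricho a b with h | rfl | h
  · exact hbc (lex_trans _ _ _ hca h)
  · exact hbc hca
  · exact hab h

theorem lexLe_total : ∀ a b : List ℕ, (lexLe a b || lexLe b a) = true := by
  intro a b
  rcases Classical.em (List.Lex (· < ·) b a) with h | h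
  · simp only [Bool.or_eq_true]
    exact Or.inr ((lexLe_iff b a).mpr (lex_asymm _ _ h))
  · simp only [Bool.or_eq_true]
    exact Or.inl ((lexLe_iff a b).mpr h)



/-- boundary positions -/
def Bset (s : List ℕ) : Finset ℕ :=
  (Finset.range (s.length - 1)).filter (fun p => s.getD p 0 ≠ s.getD (p+1) 0)

theorem card_Bset_le_numRuns : ∀ s : List ℕ, (Bset s).card ≤ numRuns s := by
  intro s
  match s with
  | [] => simp [Bset, numRuns]
  | [a] => simp [Bset, numRuns]
  | a :: b :: l =>
    have hsub : Bset (a :: b :: l) ⊆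
        (if a = b then (∅ : Finset ℕ) else {0}) ∪ (Bset (b :: l)).image (· + 1) := by
      intro p hp
      simp only [Bset, Finset.mem_filter, Finset.mem_range] at hp
      obtain ⟨hplt, hpne⟩ := hp
      rcases p with _ | q
      · have hab : a ≠ b := by simpa using hpne
        simp [hab]
      · apply Finset.mem_union_right
        simp only [Finset.mem_image]
        refine ⟨q, ?_, rfl⟩
        simp only [Bset, Finset.mem_filter, Finset.mem_range]
        constructor
        · simpa using hplt
        · simpa using hpne
    calc (Bset (a :: b :: l)).card ≤ _ := Finset.card_le_card hsub
      _ ≤ (if a = b then (∅ : Finset ℕ) else {0}).card + ((Bset (b :: l)).image (· + 1)).card :=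
          Finset.card_union_le _ _
      _ ≤ (if a = b then 0 else 1) + numRuns (b :: l) := by
          gcongr
          · split <;> simp
          · exact le_trans (Finset.card_image_le) (card_Bset_le_numRuns (b :: l))
      _ = numRuns (a :: b :: l) := rfl

/-- strings of length m over [1..σ] -/
def strs (σ : ℕ) : ℕ → Finset (List ℕ)
  | 0 => {[]}
  | m + 1 => ((Finset.Icc 1 σ) ×ˢ strs σ m).image (fun p => p.1 :: p.2)

theorem mem_strs (σ : ℕ) : ∀ m W, W ∈ strs σ m ↔ (W.length = m ∧ ∀ c ∈ W, 1 ≤ c ∧ c ≤ σ) := by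
  intro m
  induction m with
  | zero =>
    intro W
    simp only [strs, Finset.mem_singleton, List.length_eq_zero_iff]
    constructor
    · rintro rfl; simp
    · rintro ⟨rfl, _⟩; rfl
  | succ m ih =>
    intro W
    simp only [strs, Finset.mem_image, Finset.mem_product, Prod.exists]
    constructor
    · rintro ⟨a, V, ⟨ha, hV⟩, rfl⟩
      obtain ⟨hlen, hc⟩ := (ih V).mp hV
      refine ⟨by simp [hlen], ?_⟩
      intro c hc'
      rcases List.mem_cons.mp hc' with rfl | h
      · simpa [Finset.mem_Icc] using ha
      · exact hc c h
    · rintro ⟨hlen, hc⟩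
      cases W with
      | nil => simp at hlen
      | cons a V =>
        refine ⟨a, V, ⟨?_, (ih V).mpr ⟨by simpa using hlen,
          fun c h => hc c (List.mem_cons_of_mem _ h)⟩⟩, rfl⟩
        simpa [Finset.mem_Icc] using hc a List.mem_cons_self

theorem card_strs (σ : ℕ) : ∀ m, (strs σ m).card = σ ^ m := by
  intro m
  induction m with
  | zero => simp [strs]
  | succ m ih =>
    rw [strs, Finset.card_image_of_injective _ (fun p q h => ?_), Finset.card_product,
      Nat.card_Icc, ih]
    · have h : σ + 1 - 1 = σ := by omega
      rw [h]; ring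
    · simp only [List.cons.injEq] at h
      exact Prod.ext h.1 h.2

theorem rot_length (T : List ℕ) (i : ℕ) : (rot T i).length = T.length := by
  rw [rot, List.length_append, List.length_drop, List.length_take]
  omega

theorem rot_getD (T : List ℕ) (i m : ℕ) (hi : i < T.length) (hm : m < T.length) :
    (rot T i).getD m 0 = T.getD ((i + m) % T.length) 0 := by
  have h1 : rot T i = T.drop i ++ T.take i := rfl
  have hd : (T.drop i).length = T.length - i := by simp
  by_cases h : m < T.length - i
  · rw [h1, List.getD_append _ _ _ _ (by omega)]
    have e : (T.drop i).getD m 0 = T.getD (i + m) 0 := by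
      rw [List.getD_eq_getElem _ _ (by omega), List.getD_eq_getElem _ _ (by omega),
        List.getElem_drop]
    rw [e, Nat.mod_eq_of_lt (by omega)]
  · rw [h1, List.getD_append_right _ _ _ _ (by omega), hd]
    have ht : (T.take i).length = i := by simp; omega
    have e : (T.take i).getD (m - (T.length - i)) 0 = T.getD (m - (T.length - i)) 0 := by
      rw [List.getD_eq_getElem _ _ (by omega), List.getD_eq_getElem _ _ (by omega),
        List.getElem_take]
    rw [e]
    congr 1
    have e2 : i + m = (m - (T.length - i)) + T.length := by omega
    rw [e2, Nat.add_mod_right, Nat.mod_eq_of_lt (by omega)]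

theorem getLast!_eq_getD (l : List ℕ) (h : l ≠ []) :
    l.getLast! = l.getD (l.length - 1) 0 := by
  cases l with
  | nil => simp at h
  | cons a t =>
    show (a :: t).getLast (by simp) = _
    rw [List.getLast_eq_getElem, List.getD_eq_getElem _ _ (by simp)]

/-- The sorted list of rotations. -/
def sRots (T : List ℕ) : List (List ℕ) :=
  ((List.range T.length).map (rot T)).mergeSort lexLe

/-- The lexicographically `p`-th rotation. -/
def Dp (T : List ℕ) (p : ℕ) : List ℕ := (sRots T).getD p []

theorem BWT_eq (T : List ℕ) : BWT T = (sRots T).map (fun R => R.getLast!) := rfl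

theorem sRots_perm (T : List ℕ) : (sRots T).Perm ((List.range T.length).map (rot T)) :=
  List.mergeSort_perm _ _

theorem sRots_length (T : List ℕ) : (sRots T).length = T.length := by
  rw [(sRots_perm T).length_eq, List.length_map, List.length_range]

theorem BWT_length (T : List ℕ) : (BWT T).length = T.length := by
  rw [BWT_eq, List.length_map, sRots_length]

theorem Dp_is_rot (T : List ℕ) (p : ℕ) (hp : p < T.length) :
    ∃ i < T.length, Dp T p = rot T i := by
  have hmem : Dp T p ∈ sRots T := by
    rw [Dp, List.getD_eq_getElem _ _ (by rw [sRots_length]; exact hp)]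
    exact List.getElem_mem _
  have := (sRots_perm T).mem_iff.mp hmem
  rw [List.mem_map] at this
  obtain ⟨i, hi, hrot⟩ := this
  exact ⟨i, by simpa using List.mem_range.mp hi, hrot.symm⟩

theorem rot_mem_sRots (T : List ℕ) (i : ℕ) (hi : i < T.length) :
    ∃ p < T.length, Dp T p = rot T i := by
  have hmem : rot T i ∈ sRots T := by
    rw [(sRots_perm T).mem_iff, List.mem_map]
    exact ⟨i, List.mem_range.mpr hi, rfl⟩
  rw [List.mem_iff_getElem] at hmem
  obtain ⟨p, hp, hget⟩ := hmem
  refine ⟨p, by rwa [sRots_length] at hp, ?_⟩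
  rw [Dp, List.getD_eq_getElem _ _ hp, hget]

theorem Dp_length (T : List ℕ) (p : ℕ) (hp : p < T.length) :
    (Dp T p).length = T.length := by
  obtain ⟨i, _, hrot⟩ := Dp_is_rot T p hp
  rw [hrot, rot_length]

theorem Dp_le (T : List ℕ) (p q : ℕ) (hpq : p ≤ q) (hq : q < T.length) :
    Dp T p = Dp T q ∨ List.Lex (· < ·) (Dp T p) (Dp T q) := by
  rcases eq_or_lt_of_le hpq with rfl | hlt
  · exact Or.inl rfl
  have hsorted : List.Pairwise (fun a b => lexLe a b = true) (sRots T) :=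
    List.pairwise_mergeSort lexLe_trans lexLe_total _
  have hp' : p < (sRots T).length := by rw [sRots_length]; omega
  have hq' : q < (sRots T).length := by rw [sRots_length]; omega
  have hle : lexLe ((sRots T)[p]) ((sRots T)[q]) = true :=
    List.pairwise_iff_getElem.mp hsorted p q hp' hq' hlt
  rw [lexLe_iff] at hle
  have hDp : Dp T p = (sRots T)[p] := List.getD_eq_getElem _ _ hp'
  have hDq : Dp T q = (sRots T)[q] := List.getD_eq_getElem _ _ hq'
  rw [hDp, hDq]
  rcases lex_tricho ((sRots T)[p]) ((sRots T)[q]) with h | h | h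
  · exact Or.inr h
  · exact Or.inl h
  · exact absurd h hle

theorem BWT_getD (T : List ℕ) (p : ℕ) (hp : p < T.length) :
    (BWT T).getD p 0 = (Dp T p).getLast! := by
  have hp' : p < (sRots T).length := by rw [sRots_length]; exact hp
  rw [BWT_eq, List.getD_eq_getElem _ _ (by rw [List.length_map]; exact hp'),
    List.getElem_map, Dp, List.getD_eq_getElem _ _ hp']

/-- From a circular occurrence of `a :: W` we get a sorted rotation with prefix `W`
whose last character is `a`. -/
theorem occ_to_pos (T : List ℕ) (a : ℕ) (W : List ℕ) (i : ℕ)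
    (hi : i < T.length) (hW : W.length < T.length)
    (hocc : CircOccAt T (a :: W) i) :
    ∃ p < T.length, W <+: Dp T p ∧ (BWT T).getD p 0 = a := by
  have hn0 : 0 < T.length := by omega
  have hjn : (i + 1) % T.length < T.length := Nat.mod_lt _ hn0
  set j := (i + 1) % T.length with hj
  have hmod : ∀ m : ℕ, (j + m) % T.length = (i + 1 + m) % T.length := by
    intro m; rw [hj, Nat.mod_add_mod]
  -- prefix property
  have hpre : W <+: rot T j := by
    rw [List.prefix_iff_eq_take]
    apply List.ext_getElem
    · rw [List.length_take, rot_length]; omega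
    · intro m h1 h2
      have hm : m < W.length := h1
      have hmn : m < T.length := by omega
      have hb : m < (rot T j).length := by rw [rot_length]; omega
      rw [List.getElem_take]
      calc W[m] = W.getD m 0 := (List.getD_eq_getElem _ _ hm).symm
        _ = (a :: W).getD (m + 1) 0 := (List.getD_cons_succ).symm
        _ = T.getD ((i + (m + 1)) % T.length) 0 := hocc (m + 1) (by simp; omega)
        _ = T.getD ((j + m) % T.length) 0 := by rw [hmod]; congr 2; omega
        _ = (rot T j).getD m 0 := (rot_getD T j m hjn hmn).symm
        _ = (rot T j)[m] := List.getD_eq_getElem _ _ hb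
  -- last character
  have hlast : (rot T j).getLast! = a := by
    have hne : rot T j ≠ [] := by
      intro h
      have h2 := rot_length T j
      rw [h] at h2
      simp at h2; omega
    rw [getLast!_eq_getD _ hne, rot_length, rot_getD T j (T.length - 1) hjn (by omega)]
    calc T.getD ((j + (T.length - 1)) % T.length) 0
        = T.getD ((i + 0) % T.length) 0 := by
          rw [hmod]
          congr 1
          have e : i + 1 + (T.length - 1) = i + T.length := by omega
          rw [e, Nat.add_mod_right, Nat.add_zero]
      _ = (a :: W).getD 0 0 := (hocc 0 (by simp)).symm
      _ = a := List.getD_cons_zero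
  obtain ⟨p, hp, hDp⟩ := rot_mem_sRots T j hjn
  refine ⟨p, hp, by rw [hDp]; exact hpre, ?_⟩
  rw [BWT_getD T p hp, hDp, hlast]

/-- prefix interval in the sorted rotation list -/
def Iw (T W : List ℕ) : Finset ℕ :=
  (Finset.range T.length).filter (fun p => W <+: Dp T p)

theorem Iw_contiguous (T W : List ℕ) (hW : W.length ≤ T.length)
    (p q r : ℕ) (hp : p ∈ Iw T W) (hq : q ∈ Iw T W) (hpr : p ≤ r) (hrq : r ≤ q) :
    r ∈ Iw T W := by
  simp only [Iw, Finset.mem_filter, Finset.mem_range] at hp hq ⊢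
  have hr : r < T.length := by omega
  refine ⟨hr, ?_⟩
  exact lex_sandwich W (Dp T p) (Dp T r) (Dp T q) hp.2 hq.2
    (Dp_le T p r hpr hr) (Dp_le T r q hrq hq.1)
    (by rw [Dp_length T r hr]; exact hW)

/-- max index of the prefix interval -/
def MWi (T W : List ℕ) : ℕ := (Iw T W).sup id

/-- the largest position in the prefix interval carrying BWT character `a` -/
def posWa (T W : List ℕ) (a : ℕ) : ℕ :=
  ((Iw T W).filter (fun p => (BWT T).getD p 0 = a)).sup id

theorem posWa_spec (T W : List ℕ) (a : ℕ)
    (h : ∃ p ∈ Iw T W, (BWT T).getD p 0 = a) :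
    posWa T W a ∈ Iw T W ∧ (BWT T).getD (posWa T W a) 0 = a ∧
      ∀ q ∈ Iw T W, (BWT T).getD q 0 = a → q ≤ posWa T W a := by
  obtain ⟨p0, hp0, hv0⟩ := h
  have hne : ((Iw T W).filter (fun p => (BWT T).getD p 0 = a)).Nonempty :=
    ⟨p0, Finset.mem_filter.mpr ⟨hp0, hv0⟩⟩
  obtain ⟨b, hb, hsup⟩ := Finset.exists_mem_eq_sup _ hne id
  have hpos : posWa T W a = b := hsup
  rw [hpos]
  have hb' := Finset.mem_filter.mp hb
  refine ⟨hb'.1, hb'.2, ?_⟩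
  intro q hq hv
  have : q ∈ (Iw T W).filter (fun p => (BWT T).getD p 0 = a) :=
    Finset.mem_filter.mpr ⟨hq, hv⟩
  have := Finset.le_sup (f := id) this
  rw [hsup] at this
  exact this

theorem MWi_spec (T W : List ℕ) (h : (Iw T W).Nonempty) :
    MWi T W ∈ Iw T W ∧ ∀ q ∈ Iw T W, q ≤ MWi T W := by
  obtain ⟨b, hb, hsup⟩ := Finset.exists_mem_eq_sup _ h id
  have hpos : MWi T W = b := hsup
  rw [hpos]
  refine ⟨hb, ?_⟩
  intro q hq
  have := Finset.le_sup (f := id) hq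
  rw [hsup] at this
  exact this

theorem pos_boundary (T W : List ℕ) (a : ℕ)
    (hWlen : W.length ≤ T.length)
    (h : ∃ p ∈ Iw T W, (BWT T).getD p 0 = a)
    (hac : a ≠ (BWT T).getD (MWi T W) 0) :
    posWa T W a ∈ Bset (BWT T) ∧ (BWT T).getD (posWa T W a) 0 = a ∧
      W <+: Dp T (posWa T W a) := by
  obtain ⟨hpI, hpa, hpmax⟩ := posWa_spec T W a h
  have hIne : (Iw T W).Nonempty := ⟨_, hpI⟩
  obtain ⟨hMI, hMmax⟩ := MWi_spec T W hIne
  have hpM : posWa T W a ≤ MWi T W := hMmax _ hpI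
  have hpneM : posWa T W a ≠ MWi T W := by
    intro h'
    exact hac (by rw [← h', hpa])
  have hplt : posWa T W a < MWi T W := lt_of_le_of_ne hpM hpneM
  have hp1I : posWa T W a + 1 ∈ Iw T W :=
    Iw_contiguous T W hWlen _ (MWi T W) _ hpI hMI (by omega) (by omega)
  have hMn : MWi T W < T.length := by
    have h2 := hMI
    simp only [Iw, Finset.mem_filter, Finset.mem_range] at h2
    exact h2.1
  have hval : (BWT T).getD (posWa T W a + 1) 0 ≠ a := by
    intro h'
    have := hpmax _ hp1I h'
    omega
  have hpre : W <+: Dp T (posWa T W a) := by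
    have h2 := hpI
    simp only [Iw, Finset.mem_filter, Finset.mem_range] at h2
    exact h2.2
  refine ⟨?_, hpa, hpre⟩
  simp only [Bset, Finset.mem_filter, Finset.mem_range, BWT_length]
  refine ⟨by omega, ?_⟩
  rw [hpa]
  exact fun h' => hval h'.symm

end AuxProof

/-- If `σ ≥ 2`, `k ≥ 2` and every string in `[1..σ]^k` occurs in
circular `T` (e.g. `T` contains a de Bruijn sequence of order `k`), then the number of
runs of the Burrows–Wheeler transform of `T` satisfies `r_T ≥ σ^{k−1}(σ−1)`. -/
theorem deBruijn_runs_lower_bound (σ : ℕ) (T : List ℕ) (hT : Wellformed σ T) (k : ℕ)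
    (hσ : 2 ≤ σ) (hk : 2 ≤ k)
    (hall : ∀ W : List ℕ, W.length = k → (∀ c ∈ W, 1 ≤ c ∧ c ≤ σ) →
      OccursCirc T W) :
    σ ^ (k - 1) * (σ - 1) ≤ numRuns (BWT T) := by
  classical
  have hn0 : 0 < T.length := by
    obtain ⟨S, hTS, _⟩ := hT
    rw [hTS]; simp
  -- `T` is at least as long as the number of distinct strings of length `k`
  have hnk : σ ^ k ≤ T.length := by
    have hocc : ∀ W ∈ strs σ k, (Pset T W).Nonempty := by
      intro W hW
      obtain ⟨hlen, hc⟩ := (mem_strs σ k W).mp hW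
      exact hall W hlen hc
    set f : List ℕ → ℕ := fun W => if h : (Pset T W).Nonempty then h.choose else 0 with hfdef
    have hf : ∀ W ∈ strs σ k, f W ∈ Pset T W := by
      intro W hW
      have h := hocc W hW
      simp only [hfdef, dif_pos h]
      exact h.choose_spec
    have hcc := Finset.card_le_card_of_injOn (s := strs σ k) (t := Finset.range T.length) f ?_ ?_
    · rwa [card_strs, Finset.card_range] at hcc
    · intro W hW
      have h2 := hf W hW
      simp only [Pset, Finset.mem_filter] at h2
      exact h2.1
    · intro W hW W' hW' heq
      have h2 := hf W hW
      have h3 := hf W' hW'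
      simp only [Pset, Finset.mem_filter, Finset.mem_range] at h2 h3
      obtain ⟨hlen, _⟩ := (mem_strs σ k W).mp hW
      obtain ⟨hlen', _⟩ := (mem_strs σ k W').mp hW'
      apply List.ext_getElem (by rw [hlen, hlen'])
      intro m h1' h2'
      rw [← List.getD_eq_getElem W 0 h1', ← List.getD_eq_getElem W' 0 h2',
        h2.2 m (by omega), h3.2 m (by omega), heq]
  have h2k : k < 2 ^ k := Nat.lt_two_pow_self
  have hps : 2 ^ k ≤ σ ^ k := Nat.pow_le_pow_left hσ k
  have hkn : k - 1 < T.length := by omega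
  -- for every `W` of length `k-1` and every character `a`, some sorted rotation has
  -- prefix `W` and BWT character `a`
  have hkey : ∀ W ∈ strs σ (k-1), ∀ a ∈ Finset.Icc 1 σ,
      ∃ p ∈ Iw T W, (BWT T).getD p 0 = a := by
    intro W hW a ha
    obtain ⟨hlen, hc⟩ := (mem_strs σ (k-1) W).mp hW
    rw [Finset.mem_Icc] at ha
    have hocc := hall (a :: W) (by rw [List.length_cons, hlen]; omega) (by
      intro c hc'
      rcases List.mem_cons.mp hc' with rfl | h
      · exact ha
      · exact hc c h)
    obtain ⟨i, hi⟩ := hocc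
    simp only [Pset, Finset.mem_filter, Finset.mem_range] at hi
    obtain ⟨p, hp, hpre, hval⟩ := occ_to_pos T a W i hi.1 (by omega) hi.2
    refine ⟨p, ?_, hval⟩
    simp only [Iw, Finset.mem_filter, Finset.mem_range]
    exact ⟨hp, hpre⟩
  -- the injection domain
  have hWlen : ∀ W ∈ strs σ (k-1), W.length ≤ T.length := by
    intro W hW
    obtain ⟨hlen, _⟩ := (mem_strs σ (k-1) W).mp hW
    omega
  calc σ ^ (k - 1) * (σ - 1)
      ≤ ((strs σ (k-1)).sigma
          (fun W => (Finset.Icc 1 σ).erase ((BWT T).getD (MWi T W) 0))).card := by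
        rw [Finset.card_sigma]
        calc σ ^ (k-1) * (σ-1) = ∑ _W ∈ strs σ (k-1), (σ - 1) := by
              rw [Finset.sum_const, smul_eq_mul, card_strs]
          _ ≤ _ := by
              apply Finset.sum_le_sum
              intro W _
              have hh := Finset.pred_card_le_card_erase
                (s := Finset.Icc 1 σ) (a := (BWT T).getD (MWi T W) 0)
              rw [Nat.card_Icc] at hh
              omega
    _ ≤ (Bset (BWT T)).card := by
        apply Finset.card_le_card_of_injOn (fun x => posWa T x.1 x.2)
        · rintro ⟨W, a⟩ hWa
          simp only [Finset.mem_coe, Finset.mem_sigma, Finset.mem_erase] at hWa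
          obtain ⟨hW, hane, haI⟩ := hWa
          exact (pos_boundary T W a (hWlen W hW) (hkey W hW a haI) hane).1
        · rintro ⟨W, a⟩ hWa ⟨W', a'⟩ hWa' heq
          simp only [Finset.coe_sigma, Set.mem_sigma_iff, Finset.mem_coe,
            Finset.mem_erase, Finset.mem_sigma] at hWa hWa'
          have hW := hWa.1
          have hane := hWa.2.1
          have haI := hWa.2.2
          have hW' := hWa'.1
          have hane' := hWa'.2.1
          have haI' := hWa'.2.2
          obtain ⟨_, hva, hpa⟩ := pos_boundary T W a (hWlen W hW) (hkey W hW a haI) hane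
          obtain ⟨_, hva', hpa'⟩ :=
            pos_boundary T W' a' (hWlen W' hW') (hkey W' hW' a' haI') hane'
          simp only at heq
          have haa : a = a' := by rw [← hva, heq, hva']
          have hWW : W = W' := by
            rw [heq] at hpa
            obtain ⟨hlen, -⟩ := (mem_strs σ (k-1) W).mp hW
            obtain ⟨hlen', -⟩ := (mem_strs σ (k-1) W').mp hW'
            rw [List.prefix_iff_eq_take] at hpa hpa'
            have e1 : W = List.take (k-1) (Dp T (posWa T W' a')) :=
              hpa.trans (by rw [hlen])
            have e2 : W' = List.take (k-1) (Dp T (posWa T W' a')) :=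
              hpa'.trans (by rw [hlen'])
            exact e1.trans e2.symm
          subst haa
          subst hWW
          rfl
    _ ≤ numRuns (BWT T) := card_Bset_le_numRuns _
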